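/- arXiv:2311.04118 — 4 statements merged into one kernel-verified Lean document; each statement's English description precedes it below -/
import Mathlib

section
/- Let A be a local Artinian ring with maximal ideal M and residue field F, let M₀ be an A-module and N₀ a free A-module (possibly of infinite rank), and let Φ: M₀ → N₀ be an A-linear map. If the induced F-linear map M₀ ⊗_A F → N₀ ⊗_A F is injective, then Φ is injective. -/
/-- Improved Nakayama for Artinian local rings, injectivity part.
Let `A` be a local Artinian ring with maximal ideal `M` and residue field `F`,
`M₀` an `A`-module and `N₀` a *free* `A`-module (possibly of infinite rank), and
`Φ : M₀ →ₗ[A] N₀` an `A`-linear map.  If the induced `F`-linear map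
`M₀ ⊗_A F → N₀ ⊗_A F` is injective (equivalently, `Φ ⁻¹ (M • N₀) ⊆ M • M₀`),
then `Φ` is injective. -/
theorem stmt1 {A : Type*} [CommRing A] [IsArtinianRing A] [IsLocalRing A]
    {M₀ N₀ : Type*} [AddCommGroup M₀] [Module A M₀] [AddCommGroup N₀] [Module A N₀]
    [Module.Free A N₀]
    (Φ : M₀ →ₗ[A] N₀)
    (h : ∀ m : M₀, Φ m ∈ (IsLocalRing.maximalIdeal A) • (⊤ : Submodule A N₀) →
      m ∈ (IsLocalRing.maximalIdeal A) • (⊤ : Submodule A M₀)) :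
    Function.Injective Φ := by
  set I := IsLocalRing.maximalIdeal A with hI
  set F := IsLocalRing.ResidueField A
  letI : Module F (M₀ ⧸ (I • ⊤ : Submodule A M₀)) :=
    (inferInstance : Module (A ⧸ I) (M₀ ⧸ (I • ⊤ : Submodule A M₀)))
  letI : Module F (N₀ ⧸ (I • ⊤ : Submodule A N₀)) :=
    (inferInstance : Module (A ⧸ I) (N₀ ⧸ (I • ⊤ : Submodule A N₀)))
  letI : IsScalarTower A F (M₀ ⧸ (I • ⊤ : Submodule A M₀)) :=
    (inferInstance : IsScalarTower A (A ⧸ I) (M₀ ⧸ (I • ⊤ : Submodule A M₀)))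
  letI : IsScalarTower A F (N₀ ⧸ (I • ⊤ : Submodule A N₀)) :=
    (inferInstance : IsScalarTower A (A ⧸ I) (N₀ ⧸ (I • ⊤ : Submodule A N₀)))
  -- the induced map on reductions
  have hle : (I • ⊤ : Submodule A M₀) ≤ Submodule.comap Φ (I • ⊤ : Submodule A N₀) := by
    rw [Submodule.smul_le]
    intro a ha m _
    simp only [Submodule.mem_comap, map_smul]
    exact Submodule.smul_mem_smul ha trivial
  set φ : (M₀ ⧸ (I • ⊤ : Submodule A M₀)) →ₗ[A] (N₀ ⧸ (I • ⊤ : Submodule A N₀)) :=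
    Submodule.mapQ _ _ Φ hle with hφ
  have hsurj : Function.Surjective (algebraMap A F) := Ideal.Quotient.mk_surjective
  -- φ as an F-linear map, injective
  set φF := φ.extendScalarsOfSurjective hsurj with hφF
  have hker : LinearMap.ker φF = ⊥ := by
    rw [LinearMap.ker_eq_bot']
    intro x hx
    obtain ⟨m, rfl⟩ := Submodule.mkQ_surjective _ x
    have hx' : ((I • ⊤ : Submodule A N₀).mkQ (Φ m)) = 0 := hx
    rw [Submodule.mkQ_apply, Submodule.Quotient.mk_eq_zero]
    exact h m ((Submodule.Quotient.mk_eq_zero _).mp hx')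
  obtain ⟨ψ, hψ⟩ := φF.exists_leftInverse_of_injective hker
  -- lift ψ ∘ mkQ along mkQ using projectivity of N₀
  obtain ⟨Ψ, hΨ⟩ := Module.projective_lifting_property
    (Submodule.mkQ (I • ⊤ : Submodule A M₀))
    ((ψ.restrictScalars A).comp (Submodule.mkQ (I • ⊤ : Submodule A N₀)))
    (Submodule.mkQ_surjective _)
  -- T := Ψ ∘ Φ is congruent to the identity mod I
  set T := Ψ.comp Φ with hT
  have hTm : ∀ m : M₀, T m - m ∈ (I • ⊤ : Submodule A M₀) := by
    intro m
    rw [← Submodule.Quotient.mk_eq_zero, Submodule.Quotient.mk_sub, sub_eq_zero]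
    have h1 : (Submodule.Quotient.mk (T m) : M₀ ⧸ (I • ⊤ : Submodule A M₀)) =
        ψ (Submodule.Quotient.mk (Φ m)) := by
      have := congrArg (fun f => f (Φ m)) hΨ
      simpa [hT] using this
    rw [h1]
    have h2 : (Submodule.Quotient.mk (Φ m) : N₀ ⧸ (I • ⊤ : Submodule A N₀)) =
        φF (Submodule.Quotient.mk m) := by
      simp [hφF, φ, Submodule.mapQ_apply, LinearMap.extendScalarsOfSurjective_apply]
    rw [h2]
    exact congrArg (fun f => f (Submodule.Quotient.mk m)) hψ
  -- I is nilpotent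
  obtain ⟨n, hn⟩ : IsNilpotent I := by
    rw [hI, ← IsLocalRing.jacobson_eq_maximalIdeal (⊥ : Ideal A) bot_ne_top]
    exact IsArtinianRing.isNilpotent_jacobson_bot
  -- key: kernel elements lie in every power of I times M₀
  have key : ∀ k : ℕ, ∀ m : M₀, Φ m = 0 → m ∈ (I ^ k • ⊤ : Submodule A M₀) := by
    intro k
    induction k with
    | zero => intro m _; simp
    | succ k ih =>
      intro m hm
      have hmk := ih m hm
      have hTm0 : T m = 0 := by simp [hT, hm]
      have : m = -(T m - m) := by rw [hTm0]; simp
      rw [this]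
      refine Submodule.neg_mem _ ?_
      -- T - id maps I^k • ⊤ into I^(k+1) • ⊤
      have hrange : Submodule.map (T - LinearMap.id) (I ^ k • ⊤ : Submodule A M₀)
          ≤ (I ^ (k + 1) • ⊤ : Submodule A M₀) := by
        rw [Submodule.map_smul'']
        calc I ^ k • Submodule.map (T - LinearMap.id) ⊤
            ≤ I ^ k • (I • ⊤ : Submodule A M₀) := by
              refine Submodule.smul_mono le_rfl ?_
              rintro x ⟨y, -, rfl⟩
              exact hTm y
          _ = I ^ (k + 1) • ⊤ := by rw [pow_succ, ← Submodule.smul_assoc, smul_eq_mul]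
      exact hrange ⟨m, hmk, rfl⟩
  -- conclude
  rw [← LinearMap.ker_eq_bot, eq_bot_iff]
  intro m hm
  have := key n m hm
  rw [hn] at this
  simpa using this
end

section
/- Let V be a finite-dimensional F-vector space. The pairing Γ^n(V^∨) × Sym^n(V) → F defined on pure symbols by ([φ]_n, x₁x₂⋯x_n) ↦ φ(x₁)⋯φ(x_n) is a well-defined perfect pairing, inducing an isomorphism Γ^n(V^∨) ≅ Sym^n(V)^∨. -/
noncomputable section

/-- The divided power algebra `Γ(V)` of `V = R^d`, realized concretely on the monomial
basis `[e₁]_{a₁} ⋯ [e_d]_{a_d}` indexed by multi-indices `a : Fin d → ℕ`. -/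
abbrev DP (R : Type*) [CommRing R] (d : ℕ) := (Fin d → ℕ) →₀ R

/-- Multiplication in the divided power algebra:
`[e]_a · [e]_b = (∏ᵢ C(aᵢ+bᵢ, aᵢ)) [e]_{a+b}`, extended bilinearly. -/
def dpMul {R : Type*} [CommRing R] {d : ℕ} (x y : DP R d) : DP R d :=
  x.sum fun a xa => y.sum fun b yb =>
    Finsupp.single (a + b) (xa * yb * ((∏ i, Nat.choose (a i + b i) (a i) : ℕ) : R))

/-- The pure symbol `[v]_n = v ⊗ ⋯ ⊗ v ∈ Γ^n(V)`; in the monomial basis,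
`[v]_n = ∑_{|a| = n} (∏ᵢ vᵢ^{aᵢ}) [e]_a`. -/
def dpSymbol {R : Type*} [CommRing R] {d : ℕ} (v : Fin d → R) (n : ℕ) : DP R d :=
  ∑ a ∈ Finset.Nat.antidiagonalTuple d n, Finsupp.single a (∏ i, v i ^ a i)

/-- The `n`-th divided power `Γ^n(V) ⊂ Γ(V)`: the homogeneous component of degree `n`. -/
def GammaDP (R : Type*) [CommRing R] (d n : ℕ) : Submodule R (DP R d) :=
  Finsupp.supported R R {a : Fin d → ℕ | ∑ i, a i = n}

/-- The unit `1 = [v]₀` of the divided power algebra. -/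
def dpOne {R : Type*} [CommRing R] {d : ℕ} : DP R d := Finsupp.single 0 1

/-- Finite products in the divided power algebra. -/
def dpProd {R : Type*} [CommRing R] {d k : ℕ} (f : Fin k → DP R d) : DP R d :=
  (List.ofFn f).foldr dpMul dpOne

section Aux
open MvPolynomial

variable {F : Type*} [Field F] {d n : ℕ}

lemma degree_symmFun (a : Fin d → ℕ) :
    (Finsupp.equivFunOnFinite.symm a).degree = ∑ i, a i := by
  rw [Finsupp.degree_apply, Finset.sum_subset (Finset.subset_univ _)]
  · simp
  · intro i _ hi
    simpa using Finsupp.notMem_support_iff.mp hi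

lemma degree_eq_sum (v : Fin d →₀ ℕ) : v.degree = ∑ i, v i := by
  have := degree_symmFun (d := d) (⇑v)
  simpa using this

def pairB (F : Type*) [Field F] (d : ℕ) :
    ((Fin d → ℕ) →₀ F) →ₗ[F] (MvPolynomial (Fin d) F →ₗ[F] F) :=
  Finsupp.lsum F fun a =>
    LinearMap.toSpanSingleton F _ (lcoeff F (Finsupp.equivFunOnFinite.symm a))

lemma pairB_apply (x : (Fin d → ℕ) →₀ F) (f : MvPolynomial (Fin d) F) :
    pairB F d x f = x.sum fun a c => c * coeff (Finsupp.equivFunOnFinite.symm a) f := by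
  simp [pairB, Finsupp.sum, LinearMap.sum_apply, LinearMap.toSpanSingleton, smul_eq_mul]

/-- support of a homogeneous polynomial sits inside the image of antidiagonalTuple -/
lemma support_subset_image {f : MvPolynomial (Fin d) F}
    (hf : f ∈ homogeneousSubmodule (Fin d) F n) :
    f.support ⊆ (Finset.Nat.antidiagonalTuple d n).image Finsupp.equivFunOnFinite.symm := by
  intro v hv
  have hcoeff : coeff v f ≠ 0 := MvPolynomial.mem_support_iff.mp hv
  have hdeg : v.degree = n := by
    by_contra h
    exact hcoeff (((mem_homogeneousSubmodule n f).mp hf).coeff_eq_zero h)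
  refine Finset.mem_image.mpr ⟨⇑v, ?_, by simp⟩
  rw [Finset.Nat.mem_antidiagonalTuple]
  rw [degree_eq_sum] at hdeg
  exact hdeg

/-- the monomial basis element of the homogeneous submodule -/
def monoH (a : Fin d → ℕ) (n : ℕ) : homogeneousSubmodule (Fin d) F n :=
  if h : ∑ i, a i = n then
    ⟨monomial (Finsupp.equivFunOnFinite.symm a) 1,
      (mem_homogeneousSubmodule n _).mpr
        (isHomogeneous_monomial 1 ((degree_symmFun a).trans h))⟩
  else 0

def fwd (F : Type*) [Field F] (d n : ℕ) :
    GammaDP F d n →ₗ[F] Module.Dual F (homogeneousSubmodule (Fin d) F n) :=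
  ((homogeneousSubmodule (Fin d) F n).subtype.dualMap).comp
    ((pairB F d).comp (GammaDP F d n).subtype)

lemma fwd_apply (x : GammaDP F d n) (f : homogeneousSubmodule (Fin d) F n) :
    fwd F d n x f = (x : DP F d).sum
      fun a c => c * coeff (Finsupp.equivFunOnFinite.symm a) (f : MvPolynomial (Fin d) F) := by
  simp [fwd, pairB_apply]

def bwd (F : Type*) [Field F] (d n : ℕ) :
    Module.Dual F (homogeneousSubmodule (Fin d) F n) →ₗ[F] GammaDP F d n :=
  LinearMap.codRestrict (GammaDP F d n)
    (∑ a ∈ Finset.Nat.antidiagonalTuple d n,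
      (Finsupp.lsingle a).comp (Module.Dual.eval F _ (monoH a n)))
    (by
      intro L
      simp only [LinearMap.sum_apply, LinearMap.comp_apply, Module.Dual.eval_apply,
        Finsupp.lsingle_apply]
      refine Submodule.sum_mem _ fun a ha => ?_
      exact Finsupp.single_mem_supported F _ (Finset.Nat.mem_antidiagonalTuple.mp ha))

lemma bwd_apply (L : Module.Dual F (homogeneousSubmodule (Fin d) F n)) :
    (bwd F d n L : DP F d) =
      ∑ a ∈ Finset.Nat.antidiagonalTuple d n, Finsupp.single a (L (monoH a n)) := by
  simp [bwd]

lemma sum_AT_eq {M : Type*} [AddCommMonoid M] {f : MvPolynomial (Fin d) F}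
    (hf : f ∈ homogeneousSubmodule (Fin d) F n) (G : (Fin d →₀ ℕ) → M)
    (hG : ∀ v, coeff v f = 0 → G v = 0) :
    ∑ a ∈ Finset.Nat.antidiagonalTuple d n, G (Finsupp.equivFunOnFinite.symm a)
      = ∑ v ∈ f.support, G v := by
  rw [← Finset.sum_image (g := Finsupp.equivFunOnFinite.symm)
      (fun _ _ _ _ h => Finsupp.equivFunOnFinite.symm.injective h)]
  exact (Finset.sum_subset (support_subset_image hf)
    (fun v _ hv => hG v (by simpa using MvPolynomial.notMem_support_iff.mp hv))).symm

lemma key_sum {f : MvPolynomial (Fin d) F} (hf : f ∈ homogeneousSubmodule (Fin d) F n) :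
    ∑ a ∈ Finset.Nat.antidiagonalTuple d n,
      monomial (Finsupp.equivFunOnFinite.symm a) (coeff (Finsupp.equivFunOnFinite.symm a) f)
      = f := by
  rw [sum_AT_eq hf (fun v => monomial v (coeff v f)) (fun v hv => by simp [hv])]
  exact (as_sum f).symm

lemma left_inv (x : GammaDP F d n) : bwd F d n (fwd F d n x) = x := by
  apply Subtype.ext
  rw [bwd_apply]
  have hsupp : (x : DP F d).support ⊆ Finset.Nat.antidiagonalTuple d n := by
    intro a ha
    exact Finset.Nat.mem_antidiagonalTuple.mpr (x.2 ha)
  have hterm : ∀ a ∈ Finset.Nat.antidiagonalTuple d n,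
      fwd F d n x (monoH a n) = (x : DP F d) a := by
    intro a ha
    have hn : ∑ i, a i = n := Finset.Nat.mem_antidiagonalTuple.mp ha
    rw [fwd_apply, monoH, dif_pos hn]
    simp only [coeff_monomial, EmbeddingLike.apply_eq_iff_eq, mul_ite, mul_one, mul_zero]
    rw [Finsupp.sum_ite_eq (x : DP F d) a (fun _ c => c)]
    split
    · rfl
    · next h => exact (Finsupp.notMem_support_iff.mp h).symm
  calc ∑ a ∈ Finset.Nat.antidiagonalTuple d n, Finsupp.single a (fwd F d n x (monoH a n))
      = ∑ a ∈ Finset.Nat.antidiagonalTuple d n, Finsupp.single a ((x : DP F d) a) :=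
        Finset.sum_congr rfl (fun a ha => by rw [hterm a ha])
    _ = ∑ a ∈ (x : DP F d).support, Finsupp.single a ((x : DP F d) a) :=
        (Finset.sum_subset hsupp (fun a _ ha => by
          rw [Finsupp.notMem_support_iff.mp ha, Finsupp.single_zero])).symm
    _ = (x : DP F d) := Finsupp.sum_single (x : DP F d)

lemma right_inv (L : Module.Dual F (homogeneousSubmodule (Fin d) F n)) :
    fwd F d n (bwd F d n L) = L := by
  ext f
  rcases f with ⟨f, hf⟩
  have : fwd F d n (bwd F d n L) ⟨f, hf⟩ = pairB F d (bwd F d n L : DP F d) f := by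
    simp [fwd]
  rw [this, bwd_apply, map_sum]
  simp only [LinearMap.coe_sum, Finset.sum_apply]
  have hterm : ∀ a, pairB F d (Finsupp.single a (L (monoH a n))) f
      = L (monoH a n) * coeff (Finsupp.equivFunOnFinite.symm a) f := by
    intro a
    rw [pairB_apply, Finsupp.sum_single_index]
    rw [zero_mul]
  rw [Finset.sum_congr rfl (fun a _ => hterm a)]
  have hmono : ∀ a ∈ Finset.Nat.antidiagonalTuple d n,
      L (monoH a n) * coeff (Finsupp.equivFunOnFinite.symm a) f
      = L (coeff (Finsupp.equivFunOnFinite.symm a) f • monoH a n) := by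
    intro a _
    rw [map_smul, smul_eq_mul, mul_comm]
  rw [Finset.sum_congr rfl hmono, ← map_sum]
  congr 1
  apply Subtype.ext
  rw [Submodule.coe_sum]
  conv_rhs => rw [show ((⟨f, hf⟩ : homogeneousSubmodule (Fin d) F n) : MvPolynomial (Fin d) F) = f from rfl, ← key_sum hf]
  refine Finset.sum_congr rfl (fun a ha => ?_)
  have hn : ∑ i, a i = n := Finset.Nat.mem_antidiagonalTuple.mp ha
  rw [monoH, dif_pos hn]
  simp [MvPolynomial.smul_monomial]


def theEquiv (F : Type*) [Field F] (d n : ℕ) :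
    (GammaDP F d n) ≃ₗ[F] Module.Dual F (homogeneousSubmodule (Fin d) F n) :=
  LinearEquiv.ofLinear (fwd F d n) (bwd F d n)
    (LinearMap.ext right_inv) (LinearMap.ext left_inv)

lemma theEquiv_apply (x : GammaDP F d n) : theEquiv F d n x = fwd F d n x :=
  rfl


end Aux

open MvPolynomial in
/-- Let `V` be a finite-dimensional `F`-vector space (here `V = F^d`, so
that `V^∨ = F^d` via dual coordinates and `Sym^n(V)` is the space of homogeneous polynomials
of degree `n`).  The pairing `Γ^n(V^∨) × Sym^n(V) → F`, defined on pure symbols by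
`([φ]_n, x₁x₂⋯x_n) ↦ φ(x₁)⋯φ(x_n)`, is a well-defined perfect pairing, inducing an
isomorphism `Γ^n(V^∨) ≅ Sym^n(V)^∨`.  Concretely: pure symbols lie in `Γ^n`, and there is a
linear isomorphism `e : Γ^n(V^∨) ≃ Sym^n(V)^∨` with
`e([φ]_n)(f) = f(φ)` for every `φ ∈ V^∨` and every `f ∈ Sym^n(V)` (evaluation of the
degree-`n` form `f` at the coordinates of `φ`). -/
theorem stmt8 {F : Type*} [Field F] {d n : ℕ} :
    (∀ w : Fin d → F, dpSymbol w n ∈ GammaDP F d n) ∧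
    ∃ e : (GammaDP F d n) ≃ₗ[F] Module.Dual F (homogeneousSubmodule (Fin d) F n),
      ∀ (w : Fin d → F) (hw : dpSymbol w n ∈ GammaDP F d n)
        (f : MvPolynomial (Fin d) F) (hf : f ∈ homogeneousSubmodule (Fin d) F n),
        e ⟨dpSymbol w n, hw⟩ ⟨f, hf⟩ = eval w f := by
  constructor
  · intro w
    refine Submodule.sum_mem _ fun a ha => ?_
    exact Finsupp.single_mem_supported F _ (Finset.Nat.mem_antidiagonalTuple.mp ha)
  · refine ⟨theEquiv F d n, ?_⟩
    intro w hw f hf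
    have h1 : theEquiv F d n ⟨dpSymbol w n, hw⟩ ⟨f, hf⟩
        = pairB F d (dpSymbol w n) f := by
      rw [theEquiv_apply]; simp [fwd]
    rw [h1, dpSymbol, map_sum]
    simp only [LinearMap.coe_sum, Finset.sum_apply]
    have hterm : ∀ a, pairB F d (Finsupp.single a (∏ i, w i ^ a i)) f
        = (∏ i, w i ^ a i) * coeff (Finsupp.equivFunOnFinite.symm a) f := by
      intro a
      rw [pairB_apply, Finsupp.sum_single_index]
      rw [zero_mul]
    rw [Finset.sum_congr rfl (fun a _ => hterm a)]
    rw [eval_eq']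
    rw [← sum_AT_eq hf (fun v => coeff v f * ∏ i, w i ^ v i) (fun v hv => by simp [hv])]
    refine Finset.sum_congr rfl fun a _ => ?_
    rw [mul_comm]
    simp
end
end

section
/- Let F be an algebraically closed field, V a finite-dimensional F-vector space, and a, b positive F-disjoint integers. If y, y′ ∈ V are nonzero and not collinear, then the images of the multiplication maps M_y: Γ^a(V) → Γ^{a+b}(V), x ↦ x[y]_b and M_{y′}: x ↦ x[y′]_b intersect only in 0. -/
noncomputable section

open Finset MvPolynomial

namespace Stmt10

variable {F : Type*} [Field F] {d : ℕ}

def toF {d : ℕ} (c : Fin d → ℕ) : Fin d →₀ ℕ := Finsupp.equivFunOnFinite.symm c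

lemma toF_apply (c : Fin d → ℕ) (i : Fin d) : toF c i = c i := rfl

lemma toF_coe (M : Fin d →₀ ℕ) : toF (⇑M) = M := Finsupp.equivFunOnFinite.symm_apply_eq.mpr rfl

lemma toF_eq_iff (c : Fin d → ℕ) (M : Fin d →₀ ℕ) : M = toF c ↔ ∀ i, M i = c i := by
  constructor
  · intro h i; rw [h]; rfl
  · intro h; ext i; exact h i

lemma toF_degree (c : Fin d → ℕ) : (toF c).degree = ∑ i, c i := by
  rw [Finsupp.degree]
  apply Finset.sum_subset (Finset.subset_univ _)
  intro i _ hi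
  simpa [toF_apply] using Finsupp.notMem_support_iff.mp hi

/-- The pairing between `DP F d` and polynomials, linear in the polynomial. -/
def pairL (u : DP F d) : MvPolynomial (Fin d) F →ₗ[F] F where
  toFun p := u.sum fun c r => r * MvPolynomial.coeff (toF c) p
  map_add' p q := by
    rw [← Finsupp.sum_add]
    apply Finsupp.sum_congr
    intro c _
    rw [coeff_add]; ring
  map_smul' r p := by
    show (u.sum fun c s => s * coeff (toF c) (r • p)) = r • (u.sum fun c s => s * coeff (toF c) p)
    rw [smul_eq_mul, Finsupp.mul_sum]
    apply Finsupp.sum_congr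
    intro c _
    rw [coeff_smul]
    rw [smul_eq_mul]; ring

lemma pairL_apply (u : DP F d) (p : MvPolynomial (Fin d) F) :
    pairL u p = u.sum fun c r => r * MvPolynomial.coeff (toF c) p := rfl

lemma pairL_single (c : Fin d → ℕ) (r : F) (p : MvPolynomial (Fin d) F) :
    pairL (Finsupp.single c r) p = r * coeff (toF c) p := by
  rw [pairL_apply, Finsupp.sum_single_index]
  simp

lemma pairL_add_left (u v : DP F d) (p : MvPolynomial (Fin d) F) :
    pairL (u + v) p = pairL u p + pairL v p := by
  rw [pairL_apply, pairL_apply, pairL_apply]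
  exact Finsupp.sum_add_index' (by simp) (by intros; ring)

lemma pairL_zero_left (p : MvPolynomial (Fin d) F) : pairL (0 : DP F d) p = 0 := by
  rw [pairL_apply]
  exact Finsupp.sum_zero_index

lemma pairL_finset_sum_left {ι : Type*} (s : Finset ι) (f : ι → DP F d)
    (p : MvPolynomial (Fin d) F) :
    pairL (∑ i ∈ s, f i) p = ∑ i ∈ s, pairL (f i) p := by
  simp only [pairL_apply]
  exact (Finsupp.sum_finsetSum_index (by simp) (by intros; ring)).symm

lemma pairL_monomial (z : DP F d) (m : Fin d → ℕ) :
    pairL z (monomial (toF m) 1) = z m := by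
  rw [pairL_apply, Finsupp.sum]
  rw [Finset.sum_eq_single m]
  · rcases eq_or_ne (z m) 0 with h | h
    · simp [h]
    · simp [coeff_monomial]
  · intro c _ hc
    rw [coeff_monomial, if_neg, mul_zero]
    intro he
    apply hc
    funext i
    exact ((toF_eq_iff c (toF m)).mp he i).symm
  · intro hm
    simp [Finsupp.notMem_support_iff.mp hm]

lemma dpMul_single_left (c' : Fin d → ℕ) (r : F) (v : DP F d) :
    dpMul (Finsupp.single c' r) v =
      v.sum fun e s =>
        Finsupp.single (c' + e)
          (r * s * ((∏ i, Nat.choose (c' i + e i) (c' i) : ℕ) : F)) :=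
  Finsupp.sum_single_index (by simp)

lemma dpMul_zero_left (v : DP F d) : dpMul (0 : DP F d) v = 0 :=
  Finsupp.sum_zero_index

lemma dpMul_add_left (u v w : DP F d) :
    dpMul (u + v) w = dpMul u w + dpMul v w := by
  apply Finsupp.sum_add_index' (by simp)
  intro c x y
  rw [← Finsupp.sum_add]
  apply Finsupp.sum_congr
  intro e _
  rw [← Finsupp.single_add]
  congr 1
  ring

lemma dpMul_single_symbol (c' : Fin d → ℕ) (r : F) (w : Fin d → F) (n : ℕ) :
    dpMul (Finsupp.single c' r) (dpSymbol w n) =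
      ∑ e ∈ Finset.Nat.antidiagonalTuple d n,
        Finsupp.single (c' + e)
          (r * (∏ i, w i ^ e i) * ((∏ i, Nat.choose (c' i + e i) (c' i) : ℕ) : F)) := by
  rw [dpMul_single_left, dpSymbol,
    ← Finsupp.sum_finsetSum_index (by simp) (by intro e x y; rw [← Finsupp.single_add]; congr 1; ring)]
  apply Finset.sum_congr rfl
  intro e _
  rw [Finsupp.sum_single_index (by simp)]

/-- Substitution `Xᵢ ↦ Xᵢ + wᵢ t`. -/
def sig (w : Fin d → F) : MvPolynomial (Fin d) F →ₐ[F] Polynomial (MvPolynomial (Fin d) F) :=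
  aeval fun i => Polynomial.C (X i) + Polynomial.C (C (w i)) * Polynomial.X

lemma algebraMap_poly_mv (r : F) :
    algebraMap F (Polynomial (MvPolynomial (Fin d) F)) r = Polynomial.C (C r) := by
  rw [Polynomial.algebraMap_apply, MvPolynomial.algebraMap_eq]

lemma sig_monomial (w : Fin d → F) (M : Fin d →₀ ℕ) (s : F) :
    sig w (monomial M s) =
      ∑ k ∈ Fintype.piFinset (fun i => Finset.range (M i + 1)),
        Polynomial.C (monomial (toF k)
            (s * (∏ i, w i ^ (M i - k i)) * (∏ i, (Nat.choose (M i) (k i) : F))))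
          * Polynomial.X ^ (∑ i, (M i - k i)) := by
  rw [sig, aeval_monomial, Finsupp.prod_fintype _ _ (fun i => pow_zero _)]
  have hfac : ∀ i : Fin d,
      (Polynomial.C (X i : MvPolynomial (Fin d) F) + Polynomial.C (C (w i)) * Polynomial.X) ^ (M i)
      = ∑ k ∈ Finset.range (M i + 1),
          (Polynomial.C ((X i) ^ k * C (w i ^ (M i - k) * (Nat.choose (M i) k : F))))
            * Polynomial.X ^ (M i - k) := by
    intro i
    rw [add_pow]
    apply Finset.sum_congr rfl
    intro k hk
    rw [mul_pow, ← Polynomial.C_pow, ← Polynomial.C_pow, ← MvPolynomial.C_pow]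
    rw [show ((M i).choose k : Polynomial (MvPolynomial (Fin d) F))
        = Polynomial.C (C ((M i).choose k : F)) by simp]
    simp only [map_mul]
    ring
  simp_rw [hfac]
  rw [Finset.prod_univ_sum, Finset.mul_sum]
  apply Finset.sum_congr rfl
  intro k hk
  rw [Finset.prod_mul_distrib, ← map_prod, ← Finset.prod_pow_eq_pow_sum]
  rw [monomial_eq, Finsupp.prod_fintype _ _ (fun i => pow_zero _)]
  simp_rw [toF]
  rw [algebraMap_poly_mv]
  rw [Finset.prod_mul_distrib]
  simp only [map_mul, map_prod, Finsupp.coe_equivFunOnFinite_symm]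
  simp only [Finset.prod_mul_distrib]
  ring

lemma pairL_dpMul_symbol (w : Fin d → F) (n : ℕ) (u : DP F d) (p : MvPolynomial (Fin d) F) :
    pairL (dpMul u (dpSymbol w n)) p = pairL u ((sig w p).coeff n) := by
  induction u using Finsupp.induction_linear with
  | zero => rw [dpMul_zero_left, pairL_zero_left, pairL_zero_left]
  | add f g hf hg => rw [dpMul_add_left, pairL_add_left, pairL_add_left, hf, hg]
  | single c' r =>
    induction p using MvPolynomial.induction_on' with
    | add p q hp hq =>
        rw [map_add, map_add, Polynomial.coeff_add, map_add, hp, hq]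
    | monomial M s =>
      rw [dpMul_single_symbol, pairL_finset_sum_left, sig_monomial,
        Polynomial.finset_sum_coeff]
      simp_rw [Polynomial.C_mul_X_pow_eq_monomial, Polynomial.coeff_monomial]
      rw [map_sum]
      simp_rw [apply_ite (pairL (Finsupp.single c' r)), map_zero, pairL_single,
        MvPolynomial.coeff_monomial, mul_ite, mul_zero]
      by_cases hcond : (∀ i, c' i ≤ M i) ∧ (∑ i, (M i - c' i)) = n
      · obtain ⟨hle, hsum⟩ := hcond
        trans r * s * (∏ i, w i ^ (M i - c' i)) * (∏ i, ((M i).choose (c' i) : F))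
        · rw [Finset.sum_eq_single_of_mem (fun i => M i - c' i)
            (by rw [Finset.Nat.mem_antidiagonalTuple]; exact hsum)]
          · rw [if_pos]
            · have hch : (∏ i, Nat.choose (c' i + (M i - c' i)) (c' i)) =
                  ∏ i, Nat.choose (M i) (c' i) := by
                apply Finset.prod_congr rfl
                intro i _
                congr 1
                have := hle i
                omega
              rw [hch]
              push_cast
              ring
            · ext i
              simp only [toF_apply, Pi.add_apply]
              have := hle i
              omega
          · intro e he hne
            rw [if_neg]
            intro hM
            apply hne
            funext i
            have := (toF_eq_iff _ _).mp hM i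
            simp only [Pi.add_apply] at this
            omega
        · rw [Finset.sum_eq_single_of_mem c'
            (by rw [Fintype.mem_piFinset]; intro i; rw [Finset.mem_range]; exact Nat.lt_succ_of_le (hle i))]
          · rw [if_pos hsum, if_pos rfl]
            ring
          · intro k hk hne
            by_cases h1 : (∑ i, (M i - k i)) = n
            · rw [if_pos h1, if_neg]
              intro h2
              exact hne (Finsupp.equivFunOnFinite.symm.injective h2)
            · rw [if_neg h1]
      · rw [Finset.sum_eq_zero, Finset.sum_eq_zero]
        · intro k hk
          by_cases h1 : (∑ i, (M i - k i)) = n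
          · rw [if_pos h1, if_neg]
            intro h2
            have hk' : k = c' := Finsupp.equivFunOnFinite.symm.injective h2
            subst hk'
            rw [Fintype.mem_piFinset] at hk
            exact hcond ⟨fun i => by have := hk i; rw [Finset.mem_range] at this; omega, h1⟩
          · rw [if_neg h1]
        · intro e he
          rw [if_neg]
          intro hM
          rw [Finset.Nat.mem_antidiagonalTuple] at he
          apply hcond
          constructor
          · intro i
            have := (toF_eq_iff _ _).mp hM i
            simp only [Pi.add_apply] at this
            omega
          · rw [← he]
            apply Finset.sum_congr rfl
            intro i _
            have := (toF_eq_iff _ _).mp hM i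
            simp only [Pi.add_apply] at this
            omega

def linForm (A : Matrix (Fin d) (Fin d) F) (j : Fin d) : MvPolynomial (Fin d) F :=
  ∑ i, C (A j i) * X i

def Qmon (A : Matrix (Fin d) (Fin d) F) (c : Fin d → ℕ) : MvPolynomial (Fin d) F :=
  ∏ j, linForm A j ^ c j

lemma linForm_isHomogeneous (A : Matrix (Fin d) (Fin d) F) (j : Fin d) :
    (linForm A j).IsHomogeneous 1 :=
  IsHomogeneous.sum _ _ _ fun i _ => isHomogeneous_C_mul_X _ _

lemma Qmon_isHomogeneous (A : Matrix (Fin d) (Fin d) F) (c : Fin d → ℕ) :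
    (Qmon A c).IsHomogeneous (∑ j, c j) :=
  IsHomogeneous.prod _ _ _ fun j _ => by simpa using (linForm_isHomogeneous A j).pow (c j)

lemma pairL_eq_zero_of_isHomogeneous {u : DP F d} {a : ℕ} (hu : u ∈ GammaDP F d a)
    {p : MvPolynomial (Fin d) F} {n : ℕ} (hp : p.IsHomogeneous n) (hn : n ≠ a) :
    pairL u p = 0 := by
  rw [pairL_apply, Finsupp.sum]
  apply Finset.sum_eq_zero
  intro c hc
  rw [hp.coeff_eq_zero, mul_zero]
  rw [toF_degree]
  have hc' : ∑ i, c i = a := (Finsupp.mem_supported F u).mp hu hc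
  rw [hc']
  exact Ne.symm hn

lemma sig_X (w : Fin d → F) (i : Fin d) :
    sig w (X i) = Polynomial.C (X i) + Polynomial.C (C (w i)) * Polynomial.X :=
  aeval_X _ i

lemma sig_C (w : Fin d → F) (r : F) : sig w (C r) = Polynomial.C (C r) := by
  rw [sig, aeval_C, algebraMap_poly_mv]

lemma sig_linForm (w : Fin d → F) (A : Matrix (Fin d) (Fin d) F) (j : Fin d) :
    sig w (linForm A j) =
      Polynomial.C (linForm A j) + Polynomial.C (C (∑ i, A j i * w i)) * Polynomial.X := by
  rw [linForm]
  rw [map_sum]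
  calc (∑ i, sig w (C (A j i) * X i))
      = ∑ i, (Polynomial.C (C (A j i) * X i) + Polynomial.C (C (A j i * w i)) * Polynomial.X) := by
        apply Finset.sum_congr rfl
        intro i _
        rw [map_mul, sig_X, sig_C]
        rw [mul_add, ← map_mul, ← mul_assoc, ← map_mul, ← map_mul]
    _ = _ := by
        rw [Finset.sum_add_distrib, ← map_sum, ← Finset.sum_mul, ← map_sum, ← map_sum]

lemma coeff_sig_Qmon (w : Fin d → F) (A : Matrix (Fin d) (Fin d) F) (j0 : Fin d)
    (hw : ∀ j, (∑ i, A j i * w i) = if j = j0 then (1 : F) else 0) (c : Fin d → ℕ) (n : ℕ) :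
    (sig w (Qmon A c)).coeff n =
      C ((Nat.choose (c j0) n : F)) * Qmon A (Function.update c j0 (c j0 - n)) := by
  rw [Qmon, map_prod]
  simp_rw [map_pow, sig_linForm, hw]
  rw [← Finset.prod_erase_mul _ _ (Finset.mem_univ j0)]
  have h0 : ∀ j ∈ Finset.univ.erase j0,
      (Polynomial.C (linForm A j) + Polynomial.C (C (if j = j0 then (1:F) else 0))
        * Polynomial.X) ^ (c j) = Polynomial.C ((linForm A j) ^ (c j)) := by
    intro j hj
    rw [if_neg (Finset.ne_of_mem_erase hj), map_zero, map_zero, zero_mul, add_zero, map_pow]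
  rw [Finset.prod_congr rfl h0, if_pos rfl, map_one, Polynomial.C_1, one_mul, ← map_prod]
  rw [Polynomial.coeff_C_mul, add_comm (Polynomial.C (linForm A j0)), Polynomial.coeff_X_add_C_pow]
  have hQ : Qmon A (Function.update c j0 (c j0 - n)) =
      (∏ j ∈ Finset.univ.erase j0, linForm A j ^ c j) * linForm A j0 ^ (c j0 - n) := by
    rw [Qmon, ← Finset.prod_erase_mul _ _ (Finset.mem_univ j0), Function.update_self]
    congr 1
    apply Finset.prod_congr rfl
    intro j hj
    rw [Function.update_of_ne (Finset.ne_of_mem_erase hj)]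
  rw [hQ]
  rw [show ((Nat.choose (c j0) n : MvPolynomial (Fin d) F)) = C ((Nat.choose (c j0) n : F)) by
    simp]
  ring

lemma aeval_linForm (A B : Matrix (Fin d) (Fin d) F) (j : Fin d) :
    aeval (R := F) (linForm B) (linForm A j) = linForm (A * B) j := by
  rw [linForm, map_sum]
  have : ∀ i, aeval (R := F) (linForm B) (C (A j i) * X i)
      = ∑ k, C (A j i * B i k) * X k := by
    intro i
    rw [map_mul, aeval_X, aeval_C, MvPolynomial.algebraMap_eq, linForm, Finset.mul_sum]
    apply Finset.sum_congr rfl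
    intro k _
    rw [← mul_assoc, ← map_mul]
  rw [Finset.sum_congr rfl fun i _ => this i, Finset.sum_comm]
  rw [linForm]
  apply Finset.sum_congr rfl
  intro k _
  rw [← Finset.sum_mul, ← map_sum, Matrix.mul_apply]

lemma Qmon_eq_aeval (A : Matrix (Fin d) (Fin d) F) (c : Fin d → ℕ) :
    Qmon A c = aeval (R := F) (linForm A) (monomial (toF c) 1) := by
  rw [aeval_monomial, Finsupp.prod_fintype _ _ (fun i => pow_zero _), map_one, one_mul]
  rfl

lemma linForm_one (j : Fin d) : linForm (1 : Matrix (Fin d) (Fin d) F) j = X j := by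
  rw [linForm]
  rw [Finset.sum_eq_single j]
  · rw [Matrix.one_apply_eq, map_one, one_mul]
  · intro i _ hij
    rw [Matrix.one_apply_ne (Ne.symm hij), map_zero, zero_mul]
  · intro h
    exact absurd (Finset.mem_univ j) h

lemma eq_zero_of_pair_vanish (A A' : Matrix (Fin d) (Fin d) F) (hAA : A' * A = 1)
    (z : DP F d) (hv : ∀ c : Fin d → ℕ, pairL z (Qmon A c) = 0) : z = 0 := by
  have key : ∀ q : MvPolynomial (Fin d) F, pairL z (aeval (R := F) (linForm A) q) = 0 := by
    intro q
    induction q using MvPolynomial.induction_on' with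
    | monomial v r =>
        rw [show (monomial v r : MvPolynomial (Fin d) F) = r • monomial v 1 by
          rw [smul_eq_C_mul, C_mul_monomial, mul_one], map_smul, map_smul,
          show aeval (R := F) (linForm A) (monomial v (1 : F)) = Qmon A ⇑v by
            rw [Qmon_eq_aeval, toF_coe], hv ⇑v, smul_zero]
    | add p q hp hq => rw [map_add, map_add, hp, hq, add_zero]
  have hcomp : ∀ q : MvPolynomial (Fin d) F,
      aeval (R := F) (linForm A) (aeval (R := F) (linForm A') q) = q := by
    intro q
    have hc : (aeval (R := F) (linForm A)).comp (aeval (R := F) (linForm A'))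
        = AlgHom.id F (MvPolynomial (Fin d) F) := by
      apply MvPolynomial.algHom_ext
      intro j
      rw [AlgHom.comp_apply, aeval_X, aeval_linForm, hAA, linForm_one, AlgHom.id_apply]
    calc aeval (R := F) (linForm A) (aeval (R := F) (linForm A') q)
        = ((aeval (R := F) (linForm A)).comp (aeval (R := F) (linForm A'))) q := rfl
      _ = q := by rw [hc]; rfl
  ext m
  rw [← pairL_monomial z m, ← hcomp (monomial (toF m) 1), key, Finsupp.coe_zero, Pi.zero_apply]

lemma exists_basis_pair {y y' : Fin d → F} (hli : LinearIndependent F ![y, y'])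
    (i0 i1 : Fin d) (hne : i0 ≠ i1) :
    ∃ Bas : Module.Basis (Fin d) F (Fin d → F), Bas i0 = y ∧ Bas i1 = y' := by
  have hyy' : y ≠ y' := by
    intro h
    have h01 : (0 : Fin 2) = 1 := hli.injective (by
      show ![y, y'] 0 = ![y, y'] 1
      simpa using h)
    simp at h01
  have hs : LinearIndepOn F id (Set.range ![y, y']) :=
    (linearIndepOn_id_range_iff hli.injective).mpr hli
  let B : Module.Basis (hs.extend (Set.subset_univ _)) F (Fin d → F) := Module.Basis.extend hs
  haveI : Fintype (hs.extend (Set.subset_univ _)) := FiniteDimensional.fintypeBasisIndex B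
  let e : (hs.extend (Set.subset_univ _)) ≃ Fin d := B.indexEquiv (Pi.basisFun F (Fin d))
  have hyt : y ∈ hs.extend (Set.subset_univ _) :=
    hs.subset_extend _ ⟨0, by simp⟩
  have hy't : y' ∈ hs.extend (Set.subset_univ _) :=
    hs.subset_extend _ ⟨1, by simp⟩
  set a0 : (hs.extend (Set.subset_univ _)) := ⟨y, hyt⟩
  set a1 : (hs.extend (Set.subset_univ _)) := ⟨y', hy't⟩
  have ha : a0 ≠ a1 := fun h => hyy' (congrArg Subtype.val h)
  let f1 : (hs.extend (Set.subset_univ _)) ≃ Fin d := e.trans (Equiv.swap (e a0) i0)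
  have hf1 : f1 a0 = i0 := by simp [f1]
  have hv1 : f1 a1 ≠ i0 := by
    rw [← hf1]
    exact fun h => ha (f1.injective h).symm
  let f2 : (hs.extend (Set.subset_univ _)) ≃ Fin d := f1.trans (Equiv.swap (f1 a1) i1)
  have hf2a1 : f2 a1 = i1 := by simp [f2]
  have hf2a0 : f2 a0 = i0 := by
    simp only [f2, Equiv.trans_apply, hf1]
    exact Equiv.swap_apply_of_ne_of_ne (Ne.symm hv1) hne
  refine ⟨B.reindex f2, ?_, ?_⟩
  · rw [Module.Basis.reindex_apply, show f2.symm i0 = a0 from f2.symm_apply_eq.mpr hf2a0.symm]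
    exact Module.Basis.extend_apply_self hs a0
  · rw [Module.Basis.reindex_apply, show f2.symm i1 = a1 from f2.symm_apply_eq.mpr hf2a1.symm]
    exact Module.Basis.extend_apply_self hs a1

end Stmt10


open Stmt10 in
/-- Let `F` be an algebraically closed field, `V` a finite-dimensional
`F`-vector space, and `a, b` positive `F`-disjoint integers.  If `y, y′ ∈ V` are nonzero
and not collinear, then the images of the multiplication maps
`M_y : Γ^a(V) → Γ^{a+b}(V)`, `x ↦ x[y]_b`, and `M_{y′} : x ↦ x[y′]_b`
intersect only in `0`. -/
theorem stmt10 {F : Type*} [Field F] [IsAlgClosed F] {d : ℕ} {a b : ℕ}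
    (ha : 0 < a) (hab : a < b)
    (hchar : ∀ p : ℕ, p.Prime → (p : F) = 0 → a < p ^ (b.factorization p))
    (y y' : Fin d → F) (hy : y ≠ 0) (hy' : y' ≠ 0) (hcol : ∀ c : F, c • y ≠ y')
    {x x' : DP F d} (hx : x ∈ GammaDP F d a) (hx' : x' ∈ GammaDP F d a)
    (h : dpMul x (dpSymbol y b) = dpMul x' (dpSymbol y' b)) :
    dpMul x (dpSymbol y b) = 0 := by
  classical
  have hli : LinearIndependent F ![y, y'] := (LinearIndependent.pair_iff' hy).mpr hcol
  have hd2 : 2 ≤ d := by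
    have hcard := hli.fintype_card_le_finrank
    simpa [Module.finrank_fin_fun] using hcard
  set i0 : Fin d := ⟨0, by omega⟩ with hi0
  set i1 : Fin d := ⟨1, by omega⟩ with hi1
  have hne : i0 ≠ i1 := by simp [hi0, hi1, Fin.ext_iff]
  obtain ⟨Bas, hB0, hB1⟩ := exists_basis_pair hli i0 i1 hne
  set L := Bas.equivFun with hL
  set Mx := LinearMap.toMatrix' (L : (Fin d → F) →ₗ[F] (Fin d → F)) with hMx
  set Mx' := LinearMap.toMatrix' (L.symm : (Fin d → F) →ₗ[F] (Fin d → F)) with hMx'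
  have hMM : Mx * Mx' = 1 := by
    rw [hMx, hMx', ← LinearMap.toMatrix'_comp,
      show ((L : (Fin d → F) →ₗ[F] (Fin d → F)).comp
        (L.symm : (Fin d → F) →ₗ[F] (Fin d → F))) = LinearMap.id from by ext v; simp,
      LinearMap.toMatrix'_id]
  have hMM' : Mx' * Mx = 1 := mul_eq_one_comm.mp hMM
  have hrow : ∀ (v : Fin d → F) (j : Fin d), (∑ i, Mx j i * v i) = L v j := by
    intro v j
    have h1 : Matrix.toLin' Mx v = L v := by
      rw [hMx, Matrix.toLin'_toMatrix']
      rfl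
    rw [Matrix.toLin'_apply] at h1
    rw [← congrFun h1 j]
    simp [Matrix.mulVec, dotProduct]
  have hwy : ∀ j, (∑ i, Mx j i * y i) = if j = i0 then (1 : F) else 0 := by
    intro j
    rw [hrow y j, show L y j = Bas.repr y j from congrFun (Module.Basis.equivFun_apply Bas y) j,
      ← hB0, Module.Basis.repr_self, Finsupp.single_apply]
    by_cases hj : j = i0 <;> simp [hj, eq_comm]
  have hwy' : ∀ j, (∑ i, Mx j i * y' i) = if j = i1 then (1 : F) else 0 := by
    intro j
    rw [hrow y' j, show L y' j = Bas.repr y' j from congrFun (Module.Basis.equivFun_apply Bas y') j,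
      ← hB1, Module.Basis.repr_self, Finsupp.single_apply]
    by_cases hj : j = i1 <;> simp [hj, eq_comm]
  have hvan : ∀ c : Fin d → ℕ, pairL (dpMul x (dpSymbol y b)) (Qmon Mx c) = 0 := by
    intro c
    by_contra hne0
    have e1 : pairL (dpMul x (dpSymbol y b)) (Qmon Mx c)
        = (((c i0).choose b : F)) * pairL x (Qmon Mx (Function.update c i0 (c i0 - b))) := by
      rw [pairL_dpMul_symbol, coeff_sig_Qmon y Mx i0 hwy c b, ← smul_eq_C_mul, map_smul,
        smul_eq_mul]
    have e2 : pairL (dpMul x (dpSymbol y b)) (Qmon Mx c)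
        = (((c i1).choose b : F)) * pairL x' (Qmon Mx (Function.update c i1 (c i1 - b))) := by
      rw [h, pairL_dpMul_symbol, coeff_sig_Qmon y' Mx i1 hwy' c b, ← smul_eq_C_mul, map_smul,
        smul_eq_mul]
    have hb0 : b ≤ c i0 := by
      by_contra hlt
      push_neg at hlt
      rw [Nat.choose_eq_zero_of_lt hlt] at e1
      exact hne0 (by rw [e1]; simp)
    have hb1 : b ≤ c i1 := by
      by_contra hlt
      push_neg at hlt
      rw [Nat.choose_eq_zero_of_lt hlt] at e2
      exact hne0 (by rw [e2]; simp)
    have hx0 : pairL x (Qmon Mx (Function.update c i0 (c i0 - b))) ≠ 0 := by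
      intro h0
      exact hne0 (by rw [e1, h0, mul_zero])
    have hdeg0 : ∑ j, (Function.update c i0 (c i0 - b)) j = a := by
      by_contra hda
      exact hx0 (pairL_eq_zero_of_isHomogeneous hx (Qmon_isHomogeneous _ _) hda)
    have hsum : ∑ j, c j = a + b := by
      have h1 : ∑ j, (Function.update c i0 (c i0 - b)) j
          = (c i0 - b) + ∑ j ∈ Finset.univ \ {i0}, c j :=
        Finset.sum_update_of_mem (Finset.mem_univ i0) c (c i0 - b)
      have h2 : c i0 + ∑ j ∈ Finset.univ.erase i0, c j = ∑ j, c j :=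
        Finset.add_sum_erase _ _ (Finset.mem_univ i0)
      rw [Finset.sdiff_singleton_eq_erase] at h1
      omega
    have hpair : c i0 + c i1 ≤ ∑ j, c j := by
      have hsub := Finset.sum_le_sum_of_subset
        (Finset.subset_univ ({i0, i1} : Finset (Fin d))) (f := c)
      rwa [Finset.sum_pair hne] at hsub
    omega
  exact eq_zero_of_pair_vanish Mx Mx' hMM' _ hvan

end
end

section
/- Let F be a field, V a finite-dimensional F-vector space of dimension ≥ 2, and n ≥ 1. Suppose f′ ∈ GL(Γ^n(V))(F[ε]) is a linear automorphism over the dual numbers and λ: (V − {0}) → (F[ε])^× is a morphism of F-schemes such that f′([v]_n) = λ(v)·[v]_n identically on points. Then λ is constant; consequently, after rescaling, f′ fixes all pure symbols [v]_n and, if F is infinite, f′ is the identity. -/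
noncomputable section

namespace Stmt19Aux

open MvPolynomial

variable {R : Type*} [CommRing R] {d n : ℕ}

lemma dpSymbol_eq_sum_smul (v : Fin d → R) (n : ℕ) :
    dpSymbol v n = ∑ a ∈ Finset.Nat.antidiagonalTuple d n,
      (∏ i, v i ^ a i) • Finsupp.single a (1 : R) := by
  simp [dpSymbol, Finsupp.smul_single]

lemma dpSymbol_apply (v : Fin d → R) (a : Fin d → ℕ)
    (ha : a ∈ Finset.Nat.antidiagonalTuple d n) :
    dpSymbol v n a = ∏ i, v i ^ a i := by
  rw [dpSymbol, Finsupp.finset_sum_apply, Finset.sum_eq_single a]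
  · simp
  · intro b _ hne
    exact Finsupp.single_eq_of_ne' hne
  · intro h
    exact absurd ha h

lemma dpSymbol_smul (t : R) (v : Fin d → R) :
    dpSymbol (fun j => t * v j) n = t ^ n • dpSymbol v n := by
  rw [dpSymbol, dpSymbol, Finset.smul_sum]
  refine Finset.sum_congr rfl fun a ha => ?_
  rw [Finsupp.smul_single]
  congr 1
  have hsum : ∑ i, a i = n := (Finset.Nat.mem_antidiagonalTuple).1 ha
  calc ∏ i, (t * v i) ^ a i = ∏ i, (t ^ a i * v i ^ a i) := by
        simp [mul_pow]
    _ = (∏ i, t ^ a i) * ∏ i, v i ^ a i := Finset.prod_mul_distrib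
    _ = t ^ n * ∏ i, v i ^ a i := by rw [Finset.prod_pow_eq_pow_sum, hsum]

lemma dpSymbol_mem_GammaDP (v : Fin d → R) : dpSymbol v n ∈ GammaDP R d n := by
  rw [dpSymbol]
  refine Submodule.sum_mem _ fun a ha => ?_
  exact Finsupp.single_mem_supported R _ ((Finset.Nat.mem_antidiagonalTuple).1 ha)

/-- Over an infinite field, pure symbols of nonzero vectors span `Γ^n`. -/
lemma single_mem_span {F : Type*} [Field F] [Infinite F] {d n : ℕ} (hd : 1 ≤ d)
    (a : Fin d → ℕ) (ha : ∑ i, a i = n) :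
    Finsupp.single a (1 : F) ∈
      Submodule.span F {x : DP F d | ∃ v : Fin d → F, v ≠ 0 ∧ x = dpSymbol v n} := by
  by_contra hmem
  obtain ⟨φ, hφa, hφW⟩ :=
    Submodule.exists_dual_map_eq_bot_of_notMem hmem inferInstance
  have hφ0 : ∀ v : Fin d → F, v ≠ 0 → φ (dpSymbol v n) = 0 := by
    intro v hv
    have hx : dpSymbol v n ∈
        Submodule.span F {x : DP F d | ∃ v : Fin d → F, v ≠ 0 ∧ x = dpSymbol v n} :=
      Submodule.subset_span ⟨v, hv, rfl⟩
    have hmem' : φ (dpSymbol v n) ∈ Submodule.map φ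
        (Submodule.span F {x : DP F d | ∃ v : Fin d → F, v ≠ 0 ∧ x = dpSymbol v n}) :=
      ⟨_, hx, rfl⟩
    rw [hφW] at hmem'
    simpa using hmem'
  set T := Finset.Nat.antidiagonalTuple d n with hT
  set P : MvPolynomial (Fin d) F :=
    ∑ b ∈ T, MvPolynomial.monomial (Finsupp.equivFunOnFinite.symm b)
      (φ (Finsupp.single b 1)) with hP
  have hevalP : ∀ v : Fin d → F, eval v P = φ (dpSymbol v n) := by
    intro v
    rw [hP, map_sum, dpSymbol_eq_sum_smul, map_sum]
    refine Finset.sum_congr rfl fun b _ => ?_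
    rw [MvPolynomial.eval_monomial, map_smul, smul_eq_mul, mul_comm]
    congr 1
    rw [Finsupp.prod_fintype]
    · refine Finset.prod_congr rfl fun i _ => ?_
      simp
    · intro i; exact pow_zero _
  have hXP : MvPolynomial.X (⟨0, hd⟩ : Fin d) * P = 0 := by
    apply MvPolynomial.funext
    intro v
    rw [map_mul, MvPolynomial.eval_X, map_zero]
    by_cases hv : v = 0
    · subst hv; simp
    · rw [hevalP, hφ0 v hv, mul_zero]
  have hP0 : P = 0 := by
    rcases mul_eq_zero.1 hXP with h | h
    · exact absurd h (MvPolynomial.X_ne_zero _)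
    · exact h
  have hcoeff : MvPolynomial.coeff (Finsupp.equivFunOnFinite.symm a) P
      = φ (Finsupp.single a 1) := by
    rw [hP, MvPolynomial.coeff_sum]
    rw [Finset.sum_eq_single a]
    · simp [MvPolynomial.coeff_monomial]
    · intro b _ hne
      rw [MvPolynomial.coeff_monomial, if_neg]
      intro h
      exact hne (Finsupp.equivFunOnFinite.symm.injective h)
    · intro h
      exact absurd ((Finset.Nat.mem_antidiagonalTuple).2 ha) h
  rw [hP0] at hcoeff
  exact hφa hcoeff.symm


/-- The scalar `λ(v) = λ₁(v) + λ₂(v)ε`. -/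
def lamD {F : Type*} [Field F] {d : ℕ} (lam₁ lam₂ : MvPolynomial (Fin d) F)
    (v : Fin d → F) : DualNumber F :=
  algebraMap F (DualNumber F) (MvPolynomial.eval v lam₁)
    + (MvPolynomial.eval v lam₂) • DualNumber.eps

lemma fst_lamD {F : Type*} [Field F] {d : ℕ} (lam₁ lam₂ : MvPolynomial (Fin d) F)
    (v : Fin d → F) : (lamD lam₁ lam₂ v).fst = MvPolynomial.eval v lam₁ := by
  simp [lamD, TrivSqZeroExt.algebraMap_eq_inl']

lemma snd_lamD {F : Type*} [Field F] {d : ℕ} (lam₁ lam₂ : MvPolynomial (Fin d) F)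
    (v : Fin d → F) : (lamD lam₁ lam₂ v).snd = MvPolynomial.eval v lam₂ := by
  simp [lamD, TrivSqZeroExt.algebraMap_eq_inl']

end Stmt19Aux

open MvPolynomial Stmt19Aux in
theorem stmt19 {F : Type*} [Field F] [Infinite F] {d n : ℕ} (hd : 2 ≤ d) (hn : 1 ≤ n)
    (lam₁ lam₂ : MvPolynomial (Fin d) F)
    (hlam₁ : ∀ v : Fin d → F, v ≠ 0 → eval v lam₁ ≠ 0)
    (f' : DP (DualNumber F) d →ₗ[DualNumber F] DP (DualNumber F) d)
    (hbij : Function.Bijective f')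
    (hf : ∀ v : Fin d → F, v ≠ 0 →
      f' (dpSymbol (fun j => algebraMap F (DualNumber F) (v j)) n)
        = (algebraMap F (DualNumber F) (eval v lam₁) + (eval v lam₂) • DualNumber.eps) •
            dpSymbol (fun j => algebraMap F (DualNumber F) (v j)) n) :
    (∀ v w : Fin d → F, v ≠ 0 → w ≠ 0 →
      eval v lam₁ = eval w lam₁ ∧ eval v lam₂ = eval w lam₂) ∧
    ∃ c : DualNumber F, IsUnit c ∧ ∀ x ∈ GammaDP (DualNumber F) d n, f' x = c • x := by
  have hd1 : 1 ≤ d := le_trans one_le_two hd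
  have hf' : ∀ v : Fin d → F, v ≠ 0 →
      f' (dpSymbol (fun j => algebraMap F (DualNumber F) (v j)) n)
        = lamD lam₁ lam₂ v • dpSymbol (fun j => algebraMap F (DualNumber F) (v j)) n :=
    fun v hv => hf v hv
  -- scale invariance of lam on nonzero vectors
  have hscale : ∀ (v : Fin d → F), v ≠ 0 → ∀ t : F, t ≠ 0 →
      lamD lam₁ lam₂ (fun j => t * v j) = lamD lam₁ lam₂ v := by
    intro v hv t ht
    obtain ⟨i₀, hi₀⟩ := Function.ne_iff.1 hv
    have hi₀' : v i₀ ≠ 0 := by simpa using hi₀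
    have hvtne : (fun j => t * v j) ≠ 0 := by
      refine Function.ne_iff.2 ⟨i₀, ?_⟩
      simpa using mul_ne_zero ht hi₀'
    set a : Fin d → ℕ := fun j => if j = i₀ then n else 0 with ha
    have haT : a ∈ Finset.Nat.antidiagonalTuple d n := by
      rw [Finset.Nat.mem_antidiagonalTuple, ha]
      simp
    have hsymt : dpSymbol (fun j => algebraMap F (DualNumber F) (t * v j)) n
        = (algebraMap F (DualNumber F) t) ^ n •
          dpSymbol (fun j => algebraMap F (DualNumber F) (v j)) n := by
      have h : (fun j => algebraMap F (DualNumber F) (t * v j))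
          = fun j => algebraMap F (DualNumber F) t * algebraMap F (DualNumber F) (v j) := by
        funext j; rw [map_mul]
      rw [h, dpSymbol_smul]
    have h2 := hf' (fun j => t * v j) hvtne
    rw [hsymt, map_smul, hf' v hv] at h2
    have h3 := congrArg (fun x : DP (DualNumber F) d => x a) h2
    simp only [Finsupp.smul_apply] at h3
    have hcoeffa : (dpSymbol (fun j => algebraMap F (DualNumber F) (v j)) n) a
        = algebraMap F (DualNumber F) (v i₀ ^ n) := by
      rw [dpSymbol_apply _ _ haT]
      calc ∏ i, algebraMap F (DualNumber F) (v i) ^ a i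
          = ∏ i, algebraMap F (DualNumber F) (v i ^ a i) := by simp [map_pow]
        _ = algebraMap F (DualNumber F) (∏ i, v i ^ a i) := (map_prod _ _ _).symm
        _ = algebraMap F (DualNumber F) (v i₀ ^ n) := by
            congr 1
            rw [Finset.prod_eq_single i₀ (fun b _ hb => by simp [ha, hb])
              (fun h => absurd (Finset.mem_univ i₀) h)]
            simp [ha]
    rw [hcoeffa] at h3
    have hu1 : IsUnit ((algebraMap F (DualNumber F) t) ^ n) := by
      refine IsUnit.pow _ ?_
      rw [TrivSqZeroExt.algebraMap_eq_inl', TrivSqZeroExt.isUnit_inl_iff]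
      simpa using ht.isUnit
    have hu2 : IsUnit (algebraMap F (DualNumber F) (v i₀ ^ n)) := by
      rw [TrivSqZeroExt.algebraMap_eq_inl', TrivSqZeroExt.isUnit_inl_iff]
      simpa using (pow_ne_zero n hi₀').isUnit
    simp only [smul_eq_mul] at h3
    have h4 : ((algebraMap F (DualNumber F) t) ^ n * algebraMap F (DualNumber F) (v i₀ ^ n))
          * lamD lam₁ lam₂ v
        = ((algebraMap F (DualNumber F) t) ^ n * algebraMap F (DualNumber F) (v i₀ ^ n))
          * lamD lam₁ lam₂ (fun j => t * v j) := by
      rw [show ∀ x y z : DualNumber F, x * y * z = x * (z * y) from fun x y z => by ring]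
      rw [h3]
      ring
    exact ((hu1.mul hu2).mul_left_cancel h4).symm
  -- polynomial argument: scale invariance ⇒ equal to value at 0
  have key : ∀ lamP : MvPolynomial (Fin d) F,
      (∀ (v : Fin d → F), v ≠ 0 → ∀ t : F, t ≠ 0 →
        eval (fun j => t * v j) lamP = eval v lamP) →
      ∀ v : Fin d → F, v ≠ 0 → eval v lamP = eval (0 : Fin d → F) lamP := by
    intro lamP hsc v hv
    set q : Polynomial F :=
      MvPolynomial.eval₂ Polynomial.C (fun j => Polynomial.C (v j) * Polynomial.X) lamP with hq
    have hqe : ∀ t : F, Polynomial.eval t q = eval (fun j => t * v j) lamP := by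
      intro t
      have h := MvPolynomial.eval₂_comp_left (Polynomial.evalRingHom t)
        Polynomial.C (fun j => Polynomial.C (v j) * Polynomial.X) lamP
      have hcomp : (Polynomial.evalRingHom t).comp Polynomial.C = RingHom.id F := by
        refine RingHom.ext fun x => ?_
        simp only [RingHom.comp_apply, Polynomial.coe_evalRingHom, Polynomial.eval_C,
          RingHom.id_apply]
      rw [hcomp, MvPolynomial.eval₂_id] at h
      calc Polynomial.eval t q
          = Polynomial.evalRingHom t (MvPolynomial.eval₂ Polynomial.C
              (fun j => Polynomial.C (v j) * Polynomial.X) lamP) := by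
            rw [Polynomial.coe_evalRingHom, hq]
        _ = eval (⇑(Polynomial.evalRingHom t) ∘ fun j => Polynomial.C (v j) * Polynomial.X)
              lamP := h
        _ = eval (fun j => t * v j) lamP := by
            have hfun : (⇑(Polynomial.evalRingHom t) ∘ fun j => Polynomial.C (v j) * Polynomial.X)
                = fun j => t * v j := by
              funext j
              simp only [Function.comp_apply, Polynomial.coe_evalRingHom, Polynomial.eval_mul,
                Polynomial.eval_C, Polynomial.eval_X]
              ring
            rw [hfun]
    have hconst : q = Polynomial.C (eval v lamP) := by
      have hinf : {t : F | t ≠ 0}.Infinite := by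
        have h0 : ({0}ᶜ : Set F).Infinite := (Set.finite_singleton 0).infinite_compl
        refine Set.Infinite.mono ?_ h0
        intro t ht
        simpa using ht
      apply Polynomial.eq_of_infinite_eval_eq
      refine hinf.mono ?_
      intro t ht
      simp only [Set.mem_setOf_eq] at ht ⊢
      rw [hqe t, hsc v hv t ht, Polynomial.eval_C]
    have h0 := hqe 0
    rw [hconst, Polynomial.eval_C] at h0
    have hfun : (fun j => (0 : F) * v j) = (0 : Fin d → F) := by
      funext j; simp
    rw [hfun] at h0
    exact h0
  have hsc₁ : ∀ (v : Fin d → F), v ≠ 0 → ∀ t : F, t ≠ 0 →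
      eval (fun j => t * v j) lam₁ = eval v lam₁ := by
    intro v hv t ht
    have h := congrArg TrivSqZeroExt.fst (hscale v hv t ht)
    rwa [fst_lamD, fst_lamD] at h
  have hsc₂ : ∀ (v : Fin d → F), v ≠ 0 → ∀ t : F, t ≠ 0 →
      eval (fun j => t * v j) lam₂ = eval v lam₂ := by
    intro v hv t ht
    have h := congrArg TrivSqZeroExt.snd (hscale v hv t ht)
    rwa [snd_lamD, snd_lamD] at h
  have hconst₁ : ∀ v : Fin d → F, v ≠ 0 → eval v lam₁ = eval (0 : Fin d → F) lam₁ :=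
    key lam₁ hsc₁
  have hconst₂ : ∀ v : Fin d → F, v ≠ 0 → eval v lam₂ = eval (0 : Fin d → F) lam₂ :=
    key lam₂ hsc₂
  constructor
  · intro v w hv hw
    exact ⟨(hconst₁ v hv).trans (hconst₁ w hw).symm,
      (hconst₂ v hv).trans (hconst₂ w hw).symm⟩
  · have hdpos : 0 < d := lt_of_lt_of_le two_pos hd
    have hv₁ : (fun _ : Fin d => (1 : F)) ≠ 0 := by
      refine Function.ne_iff.2 ⟨⟨0, hdpos⟩, ?_⟩
      simp
    refine ⟨lamD lam₁ lam₂ (fun _ => 1), ?_, ?_⟩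
    · rw [TrivSqZeroExt.isUnit_iff_isUnit_fst, fst_lamD]
      exact (hlam₁ _ hv₁).isUnit
    · have hc : ∀ v : Fin d → F, v ≠ 0 →
          f' (dpSymbol (fun j => algebraMap F (DualNumber F) (v j)) n)
            = lamD lam₁ lam₂ (fun _ => 1) •
              dpSymbol (fun j => algebraMap F (DualNumber F) (v j)) n := by
        intro v hv
        have e1 := (hconst₁ v hv).trans (hconst₁ _ hv₁).symm
        have e2 := (hconst₂ v hv).trans (hconst₂ _ hv₁).symm
        rw [hf' v hv]
        congr 1
        rw [lamD, lamD, e1, e2]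
      -- transport the spanning fact from F to DualNumber F
      set L : DP F d →+ DP (DualNumber F) d :=
        Finsupp.mapRange.addMonoidHom (algebraMap F (DualNumber F)).toAddMonoidHom with hL
      have hLapp : ∀ (x : DP F d) (b : Fin d → ℕ),
          L x b = algebraMap F (DualNumber F) (x b) := by
        intro x b
        rw [hL]
        simp [Finsupp.mapRange.addMonoidHom]
      have hLsingle : ∀ (b : Fin d → ℕ) (r : F),
          L (Finsupp.single b r) = Finsupp.single b (algebraMap F (DualNumber F) r) := by
        intro b r
        refine Finsupp.ext fun b' => ?_
        rw [hLapp]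
        rcases eq_or_ne b b' with rfl | hne
        · simp
        · rw [Finsupp.single_eq_of_ne' hne, Finsupp.single_eq_of_ne' hne, map_zero]
      have hLsmul : ∀ (r : F) (x : DP F d),
          L (r • x) = algebraMap F (DualNumber F) r • L x := by
        intro r x
        refine Finsupp.ext fun b => ?_
        rw [hLapp, Finsupp.smul_apply, Finsupp.smul_apply, hLapp, smul_eq_mul,
          smul_eq_mul, map_mul]
      have hLsym : ∀ v : Fin d → F,
          L (dpSymbol v n) = dpSymbol (fun j => algebraMap F (DualNumber F) (v j)) n := by
        intro v
        rw [dpSymbol, dpSymbol, map_sum]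
        refine Finset.sum_congr rfl fun b _ => ?_
        rw [hLsingle]
        congr 1
        rw [map_prod]
        exact Finset.prod_congr rfl fun i _ => by rw [map_pow]
      have hsingle : ∀ b : Fin d → ℕ, (∑ i, b i) = n →
          f' (Finsupp.single b (1 : DualNumber F))
            = lamD lam₁ lam₂ (fun _ => 1) • Finsupp.single b 1 := by
        intro b hb
        have hmem := single_mem_span (F := F) (n := n) hd1 b hb
        obtain ⟨k, co, g, hg⟩ := Submodule.mem_span_set'.1 hmem
        have hrep : Finsupp.single b (1 : DualNumber F)
            = ∑ i, algebraMap F (DualNumber F) (co i) • L (g i) := by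
          have h := congrArg L hg
          rw [map_sum] at h
          simp only [hLsmul] at h
          rw [h, hLsingle, map_one]
        have hterm : ∀ i : Fin k, f' (L (g i)) = lamD lam₁ lam₂ (fun _ => 1) • L (g i) := by
          intro i
          obtain ⟨v, hv, hgv⟩ := (g i).2
          rw [hgv, hLsym]
          exact hc v hv
        rw [hrep, map_sum, Finset.smul_sum]
        refine Finset.sum_congr rfl fun i _ => ?_
        rw [map_smul, hterm i, smul_comm]
      intro x hx
      have hx' : x ∈ Submodule.span (DualNumber F)
          ((fun b => Finsupp.single b (1 : DualNumber F)) ''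
            {b : Fin d → ℕ | ∑ i, b i = n}) := by
        rw [← Finsupp.supported_eq_span_single]
        exact hx
      refine Submodule.span_induction ?_ ?_ ?_ ?_ hx'
      · rintro y ⟨b, hb, rfl⟩
        exact hsingle b hb
      · simp
      · intro y z _ _ hy hz
        rw [map_add, hy, hz, smul_add]
      · intro r y _ hy
        rw [map_smul, hy, smul_comm]

end
end
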